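/- Let ξ and ϑ be independent real-valued random variables on a probability space, with ϑ > 0 almost surely and ϑ integrable. For an integer n ≥ 1 set φ_+^n(e) = P(ξ − ϑ/n ≤ e), φ_-^n(e) = P(ξ + ϑ/n ≤ e), φ_+(e) = P(ξ ≤ e) and φ_-(e) = P(ξ < e). Then for every n ≥ 1: ∫_ℝ |φ_+^n(e) − φ_+(e)| de ≤ E[ϑ]/n and ∫_ℝ |φ_-^n(e) − φ_-(e)| de ≤ E[ϑ]/n; in particular φ_+^n → φ_+ and φ_-^n → φ_- in L¹(ℝ) as n → ∞. -/

import Mathlib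

open MeasureTheory
lemma sect_int {Ω : Type*} [MeasurableSpace Ω] (P : Measure Ω) [IsProbabilityMeasure P]
    (f g : Ω → ℝ) (hf : Measurable f) (hg : Measurable g) :
    ∫⁻ e : ℝ, P {ω | f ω ≤ e ∧ e < g ω} = ∫⁻ ω, ENNReal.ofReal (g ω - f ω) ∂P := by
  have hS : MeasurableSet {p : ℝ × Ω | f p.2 ≤ p.1 ∧ p.1 < g p.2} :=
    (measurableSet_le (hf.comp measurable_snd) measurable_fst).inter
      (measurableSet_lt measurable_fst (hg.comp measurable_snd))
  calc ∫⁻ e : ℝ, P {ω | f ω ≤ e ∧ e < g ω}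
      = ∫⁻ e : ℝ, P (Prod.mk e ⁻¹' {p : ℝ × Ω | f p.2 ≤ p.1 ∧ p.1 < g p.2}) := rfl
    _ = (volume.prod P) {p : ℝ × Ω | f p.2 ≤ p.1 ∧ p.1 < g p.2} := (Measure.prod_apply hS).symm
    _ = ∫⁻ ω, volume ((fun e => (e, ω)) ⁻¹' {p : ℝ × Ω | f p.2 ≤ p.1 ∧ p.1 < g p.2}) ∂P :=
        Measure.prod_apply_symm hS
    _ = ∫⁻ ω, ENNReal.ofReal (g ω - f ω) ∂P := by
        refine lintegral_congr fun ω => ?_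
        have : ((fun e => (e, ω)) ⁻¹' {p : ℝ × Ω | f p.2 ≤ p.1 ∧ p.1 < g p.2})
            = Set.Ico (f ω) (g ω) := rfl
        rw [this, Real.volume_Ico]

lemma sect_int' {Ω : Type*} [MeasurableSpace Ω] (P : Measure Ω) [IsProbabilityMeasure P]
    (f g : Ω → ℝ) (hf : Measurable f) (hg : Measurable g) :
    ∫⁻ e : ℝ, P {ω | f ω < e ∧ e < g ω} = ∫⁻ ω, ENNReal.ofReal (g ω - f ω) ∂P := by
  have hS : MeasurableSet {p : ℝ × Ω | f p.2 < p.1 ∧ p.1 < g p.2} :=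
    (measurableSet_lt (hf.comp measurable_snd) measurable_fst).inter
      (measurableSet_lt measurable_fst (hg.comp measurable_snd))
  calc ∫⁻ e : ℝ, P {ω | f ω < e ∧ e < g ω}
      = ∫⁻ e : ℝ, P (Prod.mk e ⁻¹' {p : ℝ × Ω | f p.2 < p.1 ∧ p.1 < g p.2}) := rfl
    _ = (volume.prod P) {p : ℝ × Ω | f p.2 < p.1 ∧ p.1 < g p.2} := (Measure.prod_apply hS).symm
    _ = ∫⁻ ω, volume ((fun e => (e, ω)) ⁻¹' {p : ℝ × Ω | f p.2 < p.1 ∧ p.1 < g p.2}) ∂P :=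
        Measure.prod_apply_symm hS
    _ = ∫⁻ ω, ENNReal.ofReal (g ω - f ω) ∂P := by
        refine lintegral_congr fun ω => ?_
        have : ((fun e => (e, ω)) ⁻¹' {p : ℝ × Ω | f p.2 < p.1 ∧ p.1 < g p.2})
            = Set.Ioo (f ω) (g ω) := rfl
        rw [this, Real.volume_Ioo]

lemma absdiff {Ω : Type*} [MeasurableSpace Ω] (P : Measure Ω) [IsProbabilityMeasure P]
    {A B : Set Ω} (hA : MeasurableSet A) (hB : MeasurableSet B) (h0 : P (B \ A) = 0) :
    ENNReal.ofReal |(P A).toReal - (P B).toReal| = P (A \ B) := by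
  have h1 : P (B ∩ A) + P (B \ A) = P B := measure_inter_add_diff _ hA
  have hBeq : P B = P (A ∩ B) := by
    rw [← h1, h0, add_zero, Set.inter_comm]
  have h2 : P (A ∩ B) + P (A \ B) = P A := measure_inter_add_diff _ hB
  have ht : (P A).toReal = (P (A ∩ B)).toReal + (P (A \ B)).toReal := by
    rw [← h2, ENNReal.toReal_add (measure_ne_top _ _) (measure_ne_top _ _)]
  rw [hBeq, ht]
  rw [show (P (A ∩ B)).toReal + (P (A \ B)).toReal - (P (A ∩ B)).toReal
      = (P (A \ B)).toReal by ring, abs_of_nonneg ENNReal.toReal_nonneg,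
    ENNReal.ofReal_toReal (measure_ne_top _ _)]
open MeasureTheory
section
variable {Ω : Type*} [MeasurableSpace Ω] (P : Measure Ω) [IsProbabilityMeasure P]
  (ξ ϑ : Ω → ℝ) (hξ : Measurable ξ) (hϑ : Measurable ϑ)
  (hpos : ∀ᵐ ω ∂P, 0 < ϑ ω) (hint : Integrable ϑ P)

include hξ hϑ hpos hint in
lemma main_plus (n : ℕ) (hn : 1 ≤ n) :
    ∫⁻ e : ℝ, ENNReal.ofReal
        |(P {ω | ξ ω - ϑ ω / n ≤ e}).toReal - (P {ω | ξ ω ≤ e}).toReal|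
      = ENNReal.ofReal ((∫ ω, ϑ ω ∂P) / n) := by
  have hn0 : (0:ℝ) < n := by exact_mod_cast hn
  have hnull : P {ω | ¬ 0 < ϑ ω} = 0 := MeasureTheory.ae_iff.mp hpos
  have hAm : ∀ e : ℝ, MeasurableSet {ω | ξ ω - ϑ ω / n ≤ e} := fun e =>
    measurableSet_le (hξ.sub (hϑ.div_const _)) measurable_const
  have hBm : ∀ e : ℝ, MeasurableSet {ω | ξ ω ≤ e} := fun e =>
    measurableSet_le hξ measurable_const
  have step1 : ∀ e : ℝ, ENNReal.ofReal
      |(P {ω | ξ ω - ϑ ω / n ≤ e}).toReal - (P {ω | ξ ω ≤ e}).toReal|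
      = P {ω | ξ ω - ϑ ω / n ≤ e ∧ e < ξ ω} := by
    intro e
    have h0 : P ({ω | ξ ω ≤ e} \ {ω | ξ ω - ϑ ω / n ≤ e}) = 0 := by
      refine measure_mono_null (fun ω hω => ?_) hnull
      simp only [Set.mem_diff, Set.mem_setOf_eq, not_le] at hω ⊢
      intro hp
      have := div_pos hp hn0
      linarith [hω.1, hω.2]
    have := absdiff P (hAm e) (hBm e) h0
    rw [this]
    congr 1
    ext ω
    simp [not_le]
  rw [lintegral_congr step1, sect_int P (fun ω => ξ ω - ϑ ω / (n:ℝ)) ξ (hξ.sub (hϑ.div_const _)) hξ]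
  have : ∀ ω, ENNReal.ofReal (ξ ω - (ξ ω - ϑ ω / n)) = ENNReal.ofReal (ϑ ω / n) := by
    intro ω; ring_nf
  rw [lintegral_congr this,
    ← MeasureTheory.ofReal_integral_eq_lintegral_ofReal (hint.div_const _)
      (hpos.mono fun ω h => (div_pos h hn0).le), integral_div]

include hξ hϑ hpos hint in
lemma main_minus (n : ℕ) (hn : 1 ≤ n) :
    ∫⁻ e : ℝ, ENNReal.ofReal
        |(P {ω | ξ ω + ϑ ω / n ≤ e}).toReal - (P {ω | ξ ω < e}).toReal|
      = ENNReal.ofReal ((∫ ω, ϑ ω ∂P) / n) := by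
  have hn0 : (0:ℝ) < n := by exact_mod_cast hn
  have hnull : P {ω | ¬ 0 < ϑ ω} = 0 := MeasureTheory.ae_iff.mp hpos
  have hAm : ∀ e : ℝ, MeasurableSet {ω | ξ ω + ϑ ω / n ≤ e} := fun e =>
    measurableSet_le (hξ.add (hϑ.div_const _)) measurable_const
  have hBm : ∀ e : ℝ, MeasurableSet {ω | ξ ω < e} := fun e =>
    measurableSet_lt hξ measurable_const
  have step1 : ∀ e : ℝ, ENNReal.ofReal
      |(P {ω | ξ ω + ϑ ω / n ≤ e}).toReal - (P {ω | ξ ω < e}).toReal|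
      = P {ω | ξ ω < e ∧ e < ξ ω + ϑ ω / n} := by
    intro e
    have h0 : P ({ω | ξ ω + ϑ ω / n ≤ e} \ {ω | ξ ω < e}) = 0 := by
      refine measure_mono_null (fun ω hω => ?_) hnull
      simp only [Set.mem_diff, Set.mem_setOf_eq, not_lt] at hω ⊢
      by_contra hp
      push_neg at hp
      have := div_pos hp hn0
      linarith [hω.1, hω.2]
    rw [abs_sub_comm]
    have := absdiff P (hBm e) (hAm e) h0
    rw [this]
    congr 1
    ext ω
    simp [not_le]
  rw [lintegral_congr step1, sect_int' P ξ (fun ω => ξ ω + ϑ ω / (n:ℝ)) hξ (hξ.add (hϑ.div_const _))]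
  have : ∀ ω, ENNReal.ofReal (ξ ω + ϑ ω / n - ξ ω) = ENNReal.ofReal (ϑ ω / n) := by
    intro ω; ring_nf
  rw [lintegral_congr this,
    ← MeasureTheory.ofReal_integral_eq_lintegral_ofReal (hint.div_const _)
      (hpos.mono fun ω h => (div_pos h hn0).le), integral_div]
end
theorem stmt_4 {Ω : Type*} [MeasurableSpace Ω] (P : MeasureTheory.Measure Ω)
    [MeasureTheory.IsProbabilityMeasure P]
    (ξ ϑ : Ω → ℝ) (hξ : Measurable ξ) (hϑ : Measurable ϑ)
    (hindep : ProbabilityTheory.IndepFun ξ ϑ P)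
    (hpos : ∀ᵐ ω ∂P, 0 < ϑ ω) (hint : MeasureTheory.Integrable ϑ P) :
    (∀ n : ℕ, 1 ≤ n →
      (∫⁻ e : ℝ, ENNReal.ofReal
          |(P {ω | ξ ω - ϑ ω / n ≤ e}).toReal - (P {ω | ξ ω ≤ e}).toReal| ≤
        ENNReal.ofReal ((∫ ω, ϑ ω ∂P) / n)) ∧
      (∫⁻ e : ℝ, ENNReal.ofReal
          |(P {ω | ξ ω + ϑ ω / n ≤ e}).toReal - (P {ω | ξ ω < e}).toReal| ≤
        ENNReal.ofReal ((∫ ω, ϑ ω ∂P) / n))) ∧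
    Filter.Tendsto (fun n : ℕ => ∫⁻ e : ℝ, ENNReal.ofReal
        |(P {ω | ξ ω - ϑ ω / n ≤ e}).toReal - (P {ω | ξ ω ≤ e}).toReal|)
      Filter.atTop (nhds 0) ∧
    Filter.Tendsto (fun n : ℕ => ∫⁻ e : ℝ, ENNReal.ofReal
        |(P {ω | ξ ω + ϑ ω / n ≤ e}).toReal - (P {ω | ξ ω < e}).toReal|)
      Filter.atTop (nhds 0) := by
  have hb : Filter.Tendsto (fun n : ℕ => ENNReal.ofReal ((∫ ω, ϑ ω ∂P) / n))
      Filter.atTop (nhds 0) := by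
    have h := tendsto_const_div_atTop_nhds_zero_nat (∫ ω, ϑ ω ∂P)
    have := ENNReal.tendsto_ofReal h
    simpa using this
  refine ⟨fun n hn => ⟨(main_plus P ξ ϑ hξ hϑ hpos hint n hn).le,
      (main_minus P ξ ϑ hξ hϑ hpos hint n hn).le⟩, ?_, ?_⟩
  · refine tendsto_of_tendsto_of_tendsto_of_le_of_le' tendsto_const_nhds hb
      (Filter.Eventually.of_forall fun n => zero_le) ?_
    filter_upwards [Filter.eventually_ge_atTop 1] with n hn
    exact (main_plus P ξ ϑ hξ hϑ hpos hint n hn).le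
  · refine tendsto_of_tendsto_of_tendsto_of_le_of_le' tendsto_const_nhds hb
      (Filter.Eventually.of_forall fun n => zero_le) ?_
    filter_upwards [Filter.eventually_ge_atTop 1] with n hn
    exact (main_minus P ξ ϑ hξ hϑ hpos hint n hn).le
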